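/- Define H := 2{F^+, F^-} on E = Λ^•(ℝ^{2l})* ⊗ S, with F^± as above. Then H acts on Λ^r(ℝ^{2l})* ⊗ S as the scalar (1/2)(r − l), i.e., H(α ⊗ s) = (1/2)(r − l)(α ⊗ s) for every α ∈ Λ^r(ℝ^{2l})* and s ∈ S. -/

import Mathlib

open ExteriorAlgebra TensorProduct MvPolynomial

noncomputable section

/-- Index set for a symplectic basis of `ℝ^{2l}`: `inl i = e_i`, `inr i = e_{i+l}`. -/
abbrev Idx (l : ℕ) := Fin l ⊕ Fin l

/-- Coefficients `ω_{jk} = ω₀(e_j, e_k)` of the standard symplectic form;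
with the convention `ω_{jk} ω^{ik} = δ_j^i` one also has `ω^{jk} = ω_{jk}`. -/
def omg (l : ℕ) : Idx l → Idx l → ℝ
  | Sum.inl a, Sum.inr b => if a = b then 1 else 0
  | Sum.inr a, Sum.inl b => if a = b then -1 else 0
  | Sum.inl _, Sum.inl _ => 0
  | Sum.inr _, Sum.inr _ => 0

/-- The standard symplectic form `ω₀` on `ℝ^{2l}`. -/
def omega0 (l : ℕ) (v w : Idx l → ℝ) : ℝ := ∑ j, ∑ k, omg l j k * v j * w k

/-- The space `Λ^•(ℝ^{2l})^*` of complex(ified) exterior forms, modelled as the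
exterior algebra on the span of the dual basis `{ε^k}`. -/
abbrev Forms (l : ℕ) := ExteriorAlgebra ℂ (Idx l → ℂ)

/-- The dual basis vector `ε^k` as a 1-form. -/
def eps (l : ℕ) (k : Idx l) : Forms l := ExteriorAlgebra.ι ℂ (Pi.single k 1)

/-- Contraction `ι_{e_j}` of exterior forms by the basis vector `e_j`. -/
def ctr (l : ℕ) (j : Idx l) : Forms l →ₗ[ℂ] Forms l :=
  CliffordAlgebra.contractLeft (LinearMap.proj j)

/-- Contraction `ι_v` by a real vector `v ∈ ℝ^{2l}`. -/
def ctrV (l : ℕ) (v : Idx l → ℝ) : Forms l →ₗ[ℂ] Forms l :=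
  ∑ j, (v j : ℂ) • ctr l j

section S
variable {l : ℕ} {S : Type*} [AddCommGroup S] [Module ℂ S]

/-- Clifford multiplication by a real vector `v`, extended from its values
`c k` on the symplectic basis vectors. -/
def clV (l : ℕ) (c : Idx l → S →ₗ[ℂ] S) (v : Idx l → ℝ) : S →ₗ[ℂ] S :=
  ∑ k, (v k : ℂ) • c k

/-- The operator `F⁺(α ⊗ s) = (i/2) Σ_k ε^k ∧ α ⊗ e_k·s` on `Λ^• ⊗ S`. -/
def Fp (l : ℕ) (c : Idx l → S →ₗ[ℂ] S) : Forms l ⊗[ℂ] S →ₗ[ℂ] Forms l ⊗[ℂ] S :=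
  (Complex.I / 2) • ∑ k, TensorProduct.map (LinearMap.mulLeft ℂ (eps l k)) (c k)

/-- The operator `F⁻(α ⊗ s) = (1/2) Σ_{j,k} ω^{jk} ι_{e_j} α ⊗ e_k·s` on `Λ^• ⊗ S`. -/
def Fm (l : ℕ) (c : Idx l → S →ₗ[ℂ] S) : Forms l ⊗[ℂ] S →ₗ[ℂ] Forms l ⊗[ℂ] S :=
  (1 / 2 : ℂ) • ∑ j, ∑ k, (omg l j k : ℂ) • TensorProduct.map (ctr l j) (c k)

end S

/-- The concrete symplectic Clifford multiplication on `S = ℂ[x^1,…,x^l]`: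
`e_i · s = i x^i s` and `e_{i+l} · s = ∂s/∂x^i`. -/
def cPoly (l : ℕ) : Idx l → MvPolynomial (Fin l) ℂ →ₗ[ℂ] MvPolynomial (Fin l) ℂ
  | Sum.inl i => Complex.I • LinearMap.mulLeft ℂ (X i)
  | Sum.inr i => (pderiv i).toLinearMap


section Aux

lemma my_pderiv_comm {l : ℕ} (a b : Fin l) (p : MvPolynomial (Fin l) ℂ) :
    pderiv a (pderiv b p) = pderiv b (pderiv a p) := by
  induction p using MvPolynomial.induction_on with
  | C c => simp
  | add p q hp hq => simp [hp, hq]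
  | mul_X p j hp =>
      simp only [pderiv_mul, pderiv_X, hp, Pi.single_apply]
      split_ifs <;> subst_vars <;> simp [pderiv_mul, hp, Pi.single_apply, *] <;> ring

lemma cComm {l : ℕ} (k' k : Idx l) (s : MvPolynomial (Fin l) ℂ) :
    cPoly l k' (cPoly l k s)
      = cPoly l k (cPoly l k' s) + ((-Complex.I) * (omg l k' k : ℂ)) • s := by
  rcases k' with a | a <;> rcases k with b | b
  · simp [cPoly, omg, smul_smul]; ring_nf
  · by_cases h : a = b <;>
      simp [cPoly, omg, h, pderiv_mul, smul_add, smul_smul, mul_comm, mul_left_comm, sub_smul]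
    try module
  · by_cases h : a = b <;>
      simp [cPoly, omg, h, pderiv_mul, smul_add, smul_smul, mul_comm, mul_left_comm]
    try module
  · simp [cPoly, omg, my_pderiv_comm]

lemma omg_mul_sumC {l : ℕ} (j k' : Idx l) :
    ∑ k, (omg l j k : ℂ) * (omg l k' k : ℂ) = if j = k' then 1 else 0 := by
  rcases j with a | a <;> rcases k' with b | b <;>
    simp [omg, Fintype.sum_sum_type, apply_ite, ite_mul, mul_ite, Finset.sum_ite_eq,
      Sum.inl.injEq, Sum.inr.injEq, eq_comm]

lemma cSum {l : ℕ} (s : MvPolynomial (Fin l) ℂ) :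
    ∑ j, ∑ k, (omg l j k : ℂ) • cPoly l k (cPoly l j s) = ((l : ℂ) * Complex.I) • s := by
  rw [Fintype.sum_sum_type]
  have h1 : ∀ a : Fin l, ∑ k, (omg l (Sum.inl a) k : ℂ) • cPoly l k (cPoly l (Sum.inl a) s)
      = cPoly l (Sum.inr a) (cPoly l (Sum.inl a) s) := by
    intro a
    rw [Fintype.sum_sum_type]
    simp [omg, ite_smul, Finset.sum_ite_eq, eq_comm]
  have h2 : ∀ a : Fin l, ∑ k, (omg l (Sum.inr a) k : ℂ) • cPoly l k (cPoly l (Sum.inr a) s)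
      = -cPoly l (Sum.inl a) (cPoly l (Sum.inr a) s) := by
    intro a
    rw [Fintype.sum_sum_type]
    simp [omg, ite_smul, Finset.sum_ite_eq, eq_comm]
  simp only [h1, h2]
  have h3 : ∀ a : Fin l, cPoly l (Sum.inr a) (cPoly l (Sum.inl a) s)
      - cPoly l (Sum.inl a) (cPoly l (Sum.inr a) s) = Complex.I • s := by
    intro a
    simp [cPoly, pderiv_mul, smul_add, mul_comm]
  rw [← Finset.sum_add_distrib]
  simp only [← sub_eq_add_neg, h3]
  rw [Finset.sum_const, Finset.card_univ, Fintype.card_fin,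
    ← Nat.cast_smul_eq_nsmul ℂ, smul_smul, mul_comm]

lemma ctr_eps_mul {l : ℕ} (j k' : Idx l) (β : Forms l) :
    ctr l j (eps l k' * β) = (if k' = j then (1:ℂ) else 0) • β - eps l k' * ctr l j β := by
  rw [ctr, eps]
  rw [CliffordAlgebra.contractLeft_ι_mul]
  simp [Pi.single_apply, eq_comm]

lemma ι_eq_sum {l : ℕ} (v : Idx l → ℂ) :
    ExteriorAlgebra.ι ℂ v = ∑ j, v j • eps l j := by
  simp only [eps, ← map_smul, ← map_sum]
  congr 1
  ext j
  simp [Pi.single_apply, eq_comm]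

lemma numberOp {l r : ℕ} (α : Forms l) (hα : α ∈ ⋀[ℂ]^r (Idx l → ℂ)) :
    ∑ j, eps l j * ctr l j α = (r : ℂ) • α := by
  refine Submodule.pow_induction_on_left'
    (M := LinearMap.range (ExteriorAlgebra.ι ℂ : (Idx l → ℂ) →ₗ[ℂ] Forms l))
    (C := fun n x _ => ∑ j, eps l j * ctr l j x = (n : ℂ) • x) ?_ ?_ ?_ (hx := hα)
  · intro c
    simp [ctr, CliffordAlgebra.contractLeft_algebraMap]
  · intro x y i hx hy ihx ihy
    simp [map_add, mul_add, Finset.sum_add_distrib, ihx, ihy, smul_add]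
  · rintro m ⟨v, rfl⟩ n x hx ih
    have h1 : ∀ j, ctr l j (ExteriorAlgebra.ι ℂ v * x)
        = v j • x - ExteriorAlgebra.ι ℂ v * ctr l j x := by
      intro j
      rw [ctr, CliffordAlgebra.contractLeft_ι_mul]
      rfl
    simp only [h1, mul_sub, mul_smul_comm, Finset.sum_sub_distrib]
    have h2 : ∑ j, v j • (eps l j * x) = ExteriorAlgebra.ι ℂ v * x := by
      rw [ι_eq_sum, Finset.sum_mul]
      simp [smul_mul_assoc]
    have h3 : ∀ j, eps l j * (ExteriorAlgebra.ι ℂ v * ctr l j x)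
        = -(ExteriorAlgebra.ι ℂ v * (eps l j * ctr l j x)) := by
      intro j
      rw [← mul_assoc, ← mul_assoc]
      rw [eps, eq_neg_of_add_eq_zero_left (ι_add_mul_swap (Pi.single j 1) v), neg_mul]
    simp only [h3, Finset.sum_neg_distrib, ← Finset.mul_sum, ih, sub_neg_eq_add]
    rw [h2, mul_smul_comm]
    push_cast
    module

variable {l : ℕ} {S : Type*} [AddCommGroup S] [Module ℂ S]

lemma Fp_tmul (c : Idx l → S →ₗ[ℂ] S) (β : Forms l) (t : S) :
    Fp l c (β ⊗ₜ[ℂ] t) = (Complex.I / 2) • ∑ k, (eps l k * β) ⊗ₜ[ℂ] (c k t) := by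
  simp [Fp, LinearMap.sum_apply]

lemma Fm_tmul (c : Idx l → S →ₗ[ℂ] S) (β : Forms l) (t : S) :
    Fm l c (β ⊗ₜ[ℂ] t)
      = (1 / 2 : ℂ) • ∑ j, ∑ k, (omg l j k : ℂ) • ((ctr l j β) ⊗ₜ[ℂ] (c k t)) := by
  rw [Fm, LinearMap.smul_apply, LinearMap.sum_apply]
  simp only [LinearMap.sum_apply, LinearMap.smul_apply, TensorProduct.map_tmul]

end Aux

set_option maxHeartbeats 1600000 in
/-- `H := 2{F⁺,F⁻}` acts on `Λ^r(ℝ^{2l})* ⊗ S` as the scalar `(1/2)(r − l)`,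
for `S = ℂ[x^1,…,x^l]` with the standard symplectic Clifford multiplication. -/
theorem H_is_scalar_on_degree_r (l r : ℕ) (α : Forms l)
    (hα : α ∈ ⋀[ℂ]^r (Idx l → ℂ)) (s : MvPolynomial (Fin l) ℂ) :
    ((2 : ℂ) • (Fp l (cPoly l) ∘ₗ Fm l (cPoly l) + Fm l (cPoly l) ∘ₗ Fp l (cPoly l)))
        (α ⊗ₜ[ℂ] s)
      = (((r : ℂ) - (l : ℂ)) / 2) • (α ⊗ₜ[ℂ] s) := by
  classical
  set c := cPoly l with hc
  have hA : Fp l c (Fm l c (α ⊗ₜ[ℂ] s))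
      = (Complex.I / 4) • ∑ j, ∑ k, ∑ k',
          (omg l j k : ℂ) • ((eps l k' * ctr l j α) ⊗ₜ[ℂ] (c k' (c k s))) := by
    rw [Fm_tmul, map_smul, map_sum]
    simp only [map_sum, map_smul, Fp_tmul]
    simp only [Finset.smul_sum, smul_smul]
    refine Finset.sum_congr rfl fun j _ => Finset.sum_congr rfl fun k _ =>
      Finset.sum_congr rfl fun k' _ => ?_
    match_scalars
    ring
  have hB : Fm l c (Fp l c (α ⊗ₜ[ℂ] s))
      = (Complex.I / 4) • ∑ j, ∑ k, ∑ k',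
          (omg l j k : ℂ) • ((ctr l j (eps l k' * α)) ⊗ₜ[ℂ] (c k (c k' s))) := by
    rw [Fp_tmul, map_smul, map_sum]
    simp only [map_sum, map_smul, Fm_tmul]
    simp only [Finset.smul_sum, smul_smul]
    rw [Finset.sum_comm]
    refine Finset.sum_congr rfl fun j _ => ?_
    rw [Finset.sum_comm]
    refine Finset.sum_congr rfl fun k _ => Finset.sum_congr rfl fun k' _ => ?_
    match_scalars
    ring
  have key : ∀ j k k' : Idx l,
      (omg l j k : ℂ) • ((eps l k' * ctr l j α) ⊗ₜ[ℂ] (c k' (c k s)))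
        + (omg l j k : ℂ) • ((ctr l j (eps l k' * α)) ⊗ₜ[ℂ] (c k (c k' s)))
      = ((omg l j k : ℂ) * (-Complex.I) * (omg l k' k : ℂ)) •
            ((eps l k' * ctr l j α) ⊗ₜ[ℂ] s)
          + (if k' = j then (omg l j k : ℂ) else 0) • (α ⊗ₜ[ℂ] (c k (c k' s))) := by
    intro j k k'
    rw [ctr_eps_mul, hc, cComm k' k s]
    split_ifs with h <;>
      simp only [one_smul, zero_smul, zero_tmul, zero_sub, sub_tmul, neg_tmul, tmul_add, tmul_smul,
        ← smul_tmul', smul_sub, smul_add, smul_smul, smul_neg] <;>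
      module
  have S1 : ∑ j, ∑ k, ∑ k' : Idx l, ((omg l j k : ℂ) * (-Complex.I) * (omg l k' k : ℂ)) •
      ((eps l k' * ctr l j α) ⊗ₜ[ℂ] s) = ((-Complex.I) * (r : ℂ)) • (α ⊗ₜ[ℂ] s) := by
    have h1 : ∀ j : Idx l, ∑ k, ∑ k' : Idx l,
        ((omg l j k : ℂ) * (-Complex.I) * (omg l k' k : ℂ)) • ((eps l k' * ctr l j α) ⊗ₜ[ℂ] s)
        = (-Complex.I) • ((eps l j * ctr l j α) ⊗ₜ[ℂ] s) := by
      intro j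
      rw [Finset.sum_comm]
      have h2 : ∀ k' : Idx l, ∑ k : Idx l,
          ((omg l j k : ℂ) * (-Complex.I) * (omg l k' k : ℂ)) • ((eps l k' * ctr l j α) ⊗ₜ[ℂ] s)
          = (if j = k' then (-Complex.I) • ((eps l k' * ctr l j α) ⊗ₜ[ℂ] s) else 0) := by
        intro k'
        rw [← Finset.sum_smul]
        have h3 : ∑ k, ((omg l j k : ℂ) * (-Complex.I) * (omg l k' k : ℂ))
            = (-Complex.I) * ∑ k, (omg l j k : ℂ) * (omg l k' k : ℂ) := by
          rw [Finset.mul_sum]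
          exact Finset.sum_congr rfl fun k _ => by ring
        rw [h3, omg_mul_sumC]
        split_ifs <;> module
      simp only [h2, Finset.sum_ite_eq, Finset.mem_univ, if_true]
    simp only [h1]
    rw [← Finset.smul_sum, ← TensorProduct.sum_tmul, numberOp α hα,
      TensorProduct.smul_tmul', smul_smul, ← TensorProduct.smul_tmul']
  have S2 : ∑ j, ∑ k, ∑ k' : Idx l, (if k' = j then (omg l j k : ℂ) else 0) •
      (α ⊗ₜ[ℂ] (c k (c k' s))) = ((l : ℂ) * Complex.I) • (α ⊗ₜ[ℂ] s) := by
    simp only [ite_smul, zero_smul, Finset.sum_ite_eq', Finset.mem_univ, if_true]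
    simp only [← TensorProduct.tmul_smul, ← TensorProduct.tmul_sum]
    have h4 : ∑ j, ∑ k, (omg l j k : ℂ) • c k (c j s) = ((l : ℂ) * Complex.I) • s := by
      rw [hc]; exact cSum s
    rw [h4, TensorProduct.tmul_smul]
  have goal2 : ((2 : ℂ) • (Fp l c ∘ₗ Fm l c + Fm l c ∘ₗ Fp l c)) (α ⊗ₜ[ℂ] s)
      = (2 : ℂ) • (Fp l c (Fm l c (α ⊗ₜ[ℂ] s)) + Fm l c (Fp l c (α ⊗ₜ[ℂ] s))) := by
    simp only [LinearMap.smul_apply, LinearMap.add_apply, LinearMap.coe_comp,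
      Function.comp_apply]
  rw [goal2, hA, hB, ← smul_add, ← Finset.sum_add_distrib]
  simp only [← Finset.sum_add_distrib]
  simp only [key]
  simp only [Finset.sum_add_distrib]
  rw [S1, S2]
  match_scalars
  linear_combination (((l : ℂ) - (r : ℂ)) / 2) * Complex.I_mul_I

end
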